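/- With the HGMP defined in the context, define the final predicted per-user beamforming outputs and per-element STAR-RIS outputs by w_k := 𝒲(u^{(T)}_k), Θ_s := 𝒞(b^{(T)}_s) and β_s := 𝒟(b^{(T)}_s), and analogously ŵ, Θ̂, β̂ from the features of the permuted instance. If the permuted instance has ê_{π₁(s), π₂(k)} = e_{s,k}, û⁰_{π₂(k)} = u⁰_k and b̂⁰_{π₁(s)} = b⁰_s, then for all k and s: ŵ_{π₂(k)} = w_k, Θ̂_{π₁(s)} = Θ_s and β̂_{π₁(s)} = β_s; i.e., the beamforming vectors, STAR-RIS phase-shift outputs and amplitude outputs produced by the BHGNN are permutation equivariant with respect to user and STAR-RIS-element permutations. -/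
import Mathlib


/-- The heterogeneous graph message passing (HGMP) of the BHGNN: `(hgmp ... t)` is
the pair of user features and RIS-element features after `t` layers. -/
def hgmp {U B E M M' W0 C0 D0 : Type*} [AddCommMonoid M] [AddCommMonoid M'] {S K : ℕ}
    (e : Fin S → Fin K → E)
    (φ : ℕ → B → U → E → M) (ψ : ℕ → U → B → E → M')
    (𝒲 : U → W0) (𝒞 : B → C0) (𝒟 : B → D0)
    (𝒰 : ℕ → U → W0 → M → U) (ℬ : ℕ → B → C0 → D0 → M' → B)
    (u0 : Fin K → U) (b0 : Fin S → B) : ℕ → (Fin K → U) × (Fin S → B)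
  | 0 => (u0, b0)
  | t + 1 =>
    let p := hgmp e φ ψ 𝒲 𝒞 𝒟 𝒰 ℬ u0 b0 t
    (fun k => 𝒰 (t + 1) (p.1 k) (𝒲 (p.1 k)) (∑ s, φ (t + 1) (p.2 s) (p.1 k) (e s k)),
     fun s => ℬ (t + 1) (p.2 s) (𝒞 (p.2 s)) (𝒟 (p.2 s))
        (∑ k, ψ (t + 1) (p.1 k) (p.2 s) (e s k)))

/-- The final predicted per-user beamforming outputs `w_k = 𝒲(u_k^{(T)})` and
per-element STAR-RIS outputs `Θ_s = 𝒞(b_s^{(T)})`, `β_s = 𝒟(b_s^{(T)})` of the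
BHGNN are permutation equivariant with respect to user and STAR-RIS-element
permutations. -/
theorem bhgnn_outputs_perm_equivariant {U B E M M' W0 C0 D0 : Type*}
    [AddCommMonoid M] [AddCommMonoid M'] {S K : ℕ}
    (φ : ℕ → B → U → E → M) (ψ : ℕ → U → B → E → M')
    (𝒲 : U → W0) (𝒞 : B → C0) (𝒟 : B → D0)
    (𝒰 : ℕ → U → W0 → M → U) (ℬ : ℕ → B → C0 → D0 → M' → B)
    (T : ℕ) (e e' : Fin S → Fin K → E)
    (u0 u0' : Fin K → U) (b0 b0' : Fin S → B)
    (π₁ : Equiv.Perm (Fin S)) (π₂ : Equiv.Perm (Fin K))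
    (he : ∀ s k, e' (π₁ s) (π₂ k) = e s k)
    (hu0 : ∀ k, u0' (π₂ k) = u0 k) (hb0 : ∀ s, b0' (π₁ s) = b0 s) :
    (∀ k, 𝒲 ((hgmp e' φ ψ 𝒲 𝒞 𝒟 𝒰 ℬ u0' b0' T).1 (π₂ k)) =
        𝒲 ((hgmp e φ ψ 𝒲 𝒞 𝒟 𝒰 ℬ u0 b0 T).1 k)) ∧
    (∀ s, 𝒞 ((hgmp e' φ ψ 𝒲 𝒞 𝒟 𝒰 ℬ u0' b0' T).2 (π₁ s)) =
        𝒞 ((hgmp e φ ψ 𝒲 𝒞 𝒟 𝒰 ℬ u0 b0 T).2 s)) ∧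
    (∀ s, 𝒟 ((hgmp e' φ ψ 𝒲 𝒞 𝒟 𝒰 ℬ u0' b0' T).2 (π₁ s)) =
        𝒟 ((hgmp e φ ψ 𝒲 𝒞 𝒟 𝒰 ℬ u0 b0 T).2 s)) := by
  have key : ∀ t, (∀ k, (hgmp e' φ ψ 𝒲 𝒞 𝒟 𝒰 ℬ u0' b0' t).1 (π₂ k) =
        (hgmp e φ ψ 𝒲 𝒞 𝒟 𝒰 ℬ u0 b0 t).1 k) ∧
      (∀ s, (hgmp e' φ ψ 𝒲 𝒞 𝒟 𝒰 ℬ u0' b0' t).2 (π₁ s) =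
        (hgmp e φ ψ 𝒲 𝒞 𝒟 𝒰 ℬ u0 b0 t).2 s) := by
    intro t
    induction t with
    | zero => exact ⟨hu0, hb0⟩
    | succ t ih =>
      obtain ⟨ihu, ihb⟩ := ih
      constructor
      · intro k
        simp only [hgmp, ihu, ihb]
        congr 1
        rw [← Equiv.sum_comp π₁]
        exact Finset.sum_congr rfl fun s _ => by rw [ihb, he]
      · intro s
        simp only [hgmp, ihu, ihb]
        congr 1
        rw [← Equiv.sum_comp π₂]
        exact Finset.sum_congr rfl fun k _ => by rw [ihu, he]
  exact ⟨fun k => by rw [(key T).1 k], fun s => by rw [(key T).2 s],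
    fun s => by rw [(key T).2 s]⟩
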